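/- Let (ω_j) be a homogeneous Poisson point process on ℝ^d with unit intensity and let γ > d. There is a constant C = C(γ, d) such that for all ε > 0, all r > 1, and all R > C ε^{−1/(γ−d)} ∨ 2r, P( sup_{y ∈ B(0,r)} Σ_{ω_j ∉ B(0,R)} |y − ω_j|^{−γ} > ε ) ≤ exp(−4 ε R^γ). -/

import Mathlib

set_option maxHeartbeats 1000000


open MeasureTheory ProbabilityTheory
open scoped ENNReal

/-- A Poisson point process on `E` with intensity measure `μ`. -/
def IsPoissonPP {Ω E : Type*} [MeasurableSpace Ω] [MeasurableSpace E]
    (P : Measure Ω) (N : Ω → Measure E) (μ : Measure E) : Prop :=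
  (∀ A : Set E, MeasurableSet A → Measurable fun ω => N ω A) ∧
  (∀ A : Set E, MeasurableSet A → μ A < ⊤ → ∀ n : ℕ,
      P {ω | N ω A = n}
        = ENNReal.ofReal (Real.exp (-(μ A).toReal) * (μ A).toReal ^ n / n.factorial)) ∧
  (∀ (k : ℕ) (A : Fin k → Set E), (∀ i, MeasurableSet (A i)) →
      Pairwise (Function.onFun Disjoint A) →
      iIndepFun (m := fun _ => (inferInstance : MeasurableSpace ℝ≥0∞))
        (fun i ω => N ω (A i)) P)

section Aux

lemma tsum_pow_div_factorial' (x : ℝ) :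
    ∑' n : ℕ, x ^ n / (n.factorial : ℝ) = Real.exp x := by
  rw [Real.exp_eq_exp_ℝ, NormedSpace.exp_eq_tsum_div]

lemma poisson_tail {Ω : Type*} [MeasurableSpace Ω] (P : Measure Ω) [IsProbabilityMeasure P]
    (X : Ω → ℝ≥0∞) (hX : Measurable X) (lam : ℝ) (hlam : 0 ≤ lam)
    (hpmf : ∀ n : ℕ, P {ω | X ω = n}
      = ENNReal.ofReal (Real.exp (-lam) * lam ^ n / n.factorial))
    (m t : ℝ) (hm : 0 ≤ m) (ht : 0 ≤ t) :
    P {ω | X ω > ENNReal.ofReal m}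
      ≤ ENNReal.ofReal (Real.exp (lam * Real.exp t - t * m)) := by
  have hmeas : ∀ n : ℕ, MeasurableSet {ω | X ω = (n : ℝ≥0∞)} := fun n =>
    hX (measurableSet_singleton _)
  have hdisj : Pairwise (Function.onFun Disjoint fun n : ℕ => {ω | X ω = (n : ℝ≥0∞)}) := by
    intro a b hab
    refine Set.disjoint_left.2 fun ω ha hb => hab ?_
    exact Nat.cast_injective (ha.symm.trans hb)
  -- pmf summability and sum
  have hsum0 : Summable (fun n : ℕ => Real.exp (-lam) * lam ^ n / n.factorial) := by
    simpa [mul_div_assoc] using (Real.summable_pow_div_factorial lam).mul_left (Real.exp (-lam))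
  have hnn : ∀ n : ℕ, 0 ≤ Real.exp (-lam) * lam ^ n / n.factorial := fun n => by positivity
  have htot : (∑' n : ℕ, Real.exp (-lam) * lam ^ n / n.factorial) = 1 := by
    have : (∑' n : ℕ, Real.exp (-lam) * lam ^ n / n.factorial)
        = Real.exp (-lam) * ∑' n : ℕ, lam ^ n / n.factorial := by
      rw [← tsum_mul_left]; simp [mul_div_assoc]
    rw [this, tsum_pow_div_factorial', ← Real.exp_add]; simp
  have hPG : P (⋃ n : ℕ, {ω | X ω = (n : ℝ≥0∞)}) = 1 := by
    rw [measure_iUnion hdisj hmeas]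
    simp_rw [hpmf]
    rw [← ENNReal.ofReal_tsum_of_nonneg hnn hsum0, htot, ENNReal.ofReal_one]
  have hGc : P (⋃ n : ℕ, {ω | X ω = (n : ℝ≥0∞)})ᶜ = 0 := by
    rw [measure_compl (MeasurableSet.iUnion hmeas) (measure_ne_top _ _), hPG, measure_univ,
      tsub_self]
  -- inclusion
  have hincl : {ω | X ω > ENNReal.ofReal m}
      ⊆ (⋃ n : ℕ, {ω | X ω = (n : ℝ≥0∞)})ᶜ
        ∪ ⋃ n : ℕ, {ω | X ω = (n : ℝ≥0∞) ∧ m < n} := by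
    intro ω hω
    by_cases hG : ω ∈ ⋃ n : ℕ, {ω | X ω = (n : ℝ≥0∞)}
    · right
      obtain ⟨n, hn⟩ := Set.mem_iUnion.1 hG
      refine Set.mem_iUnion.2 ⟨n, hn, ?_⟩
      have : ENNReal.ofReal m < (n : ℝ≥0∞) := hn ▸ hω
      rw [← ENNReal.ofReal_natCast n] at this
      exact (ENNReal.ofReal_lt_ofReal_iff_of_nonneg hm).1 this
    · exact Or.inl hG
  refine le_trans (measure_mono hincl) ?_
  refine le_trans (measure_union_le _ _) ?_
  rw [hGc, zero_add]
  refine le_trans (measure_iUnion_le _) ?_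
  -- bound each term
  have hterm : ∀ n : ℕ, P {ω | X ω = (n : ℝ≥0∞) ∧ m < n}
      ≤ ENNReal.ofReal (Real.exp (-lam - t * m) * (lam * Real.exp t) ^ n / n.factorial) := by
    intro n
    by_cases hmn : m < n
    · have : {ω | X ω = (n : ℝ≥0∞) ∧ m < n} = {ω | X ω = (n : ℝ≥0∞)} := by
        ext ω; simp [hmn]
      rw [this, hpmf]
      apply ENNReal.ofReal_le_ofReal
      rw [div_le_div_iff_of_pos_right (by positivity : (0:ℝ) < n.factorial)]
      have h1 : Real.exp (-lam) * lam ^ n ≤ Real.exp (-lam - t * m) * (lam * Real.exp t) ^ n := by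
        rw [mul_pow, ← Real.exp_nat_mul]
        have : Real.exp (-lam) ≤ Real.exp (-lam - t * m) * Real.exp (n * t) := by
          rw [← Real.exp_add]
          apply Real.exp_le_exp.2
          nlinarith [hmn.le]
        calc Real.exp (-lam) * lam ^ n
            ≤ (Real.exp (-lam - t * m) * Real.exp (n * t)) * lam ^ n := by
              apply mul_le_mul_of_nonneg_right this (by positivity)
          _ = Real.exp (-lam - t * m) * (lam ^ n * Real.exp (n * t)) := by ring
      exact h1
    · have : {ω | X ω = (n : ℝ≥0∞) ∧ m < n} = ∅ := by
        ext ω; simp [hmn]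
      rw [this, measure_empty]
      positivity
  refine le_trans (ENNReal.tsum_le_tsum hterm) ?_
  have hsum1 : Summable (fun n : ℕ => Real.exp (-lam - t * m) * (lam * Real.exp t) ^ n / n.factorial) := by
    simpa [mul_div_assoc] using
      (Real.summable_pow_div_factorial (lam * Real.exp t)).mul_left (Real.exp (-lam - t * m))
  rw [← ENNReal.ofReal_tsum_of_nonneg (fun n => by positivity) hsum1]
  apply ENNReal.ofReal_le_ofReal
  have : (∑' n : ℕ, Real.exp (-lam - t * m) * (lam * Real.exp t) ^ n / n.factorial)
      = Real.exp (-lam - t * m) * Real.exp (lam * Real.exp t) := by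
    rw [← tsum_pow_div_factorial' (lam * Real.exp t), ← tsum_mul_left]
    simp [mul_div_assoc]
  rw [this, ← Real.exp_add]
  apply Real.exp_le_exp.2
  nlinarith [Real.exp_pos t]

end Aux


/-- Tail estimate for the long-range Poissonian potential: for a unit-intensity
Poisson process on `ℝ^d` and `γ > d`, the sum `Σ_{ω_j ∉ B(0,R)} |y − ω_j|^{−γ}`,
uniformly over `y ∈ B(0,r)`, exceeds `ε` with exponentially small probability. -/
theorem stmt_19 {Ω : Type*} [MeasurableSpace Ω] (P : Measure Ω) [IsProbabilityMeasure P]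
    (d : ℕ) (hd : 1 ≤ d) (γ : ℝ) (hγ : γ > d)
    (N : Ω → Measure (EuclideanSpace ℝ (Fin d)))
    (hPPP : IsPoissonPP P N (volume : Measure (EuclideanSpace ℝ (Fin d))))
    (T : ℝ → EuclideanSpace ℝ (Fin d) → Ω → ℝ≥0∞)
    (hT : ∀ R y ω, T R y ω = ∫⁻ z : EuclideanSpace ℝ (Fin d),
        (if ‖z‖ ≥ R then ENNReal.ofReal (‖y - z‖ ^ (-γ)) else 0) ∂(N ω)) :
    ∃ C > (0:ℝ), ∀ ε > (0:ℝ), ∀ r > (1:ℝ), ∀ R : ℝ,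
      R > max (C * ε ^ (-1 / (γ - d))) (2 * r) →
      P {ω | ∃ y : EuclideanSpace ℝ (Fin d), ‖y‖ < r ∧ T R y ω > ENNReal.ofReal ε}
        ≤ ENNReal.ofReal (Real.exp (-4 * ε * R ^ γ)) := by
  classical
  obtain ⟨hNmeas, hpmf, -⟩ := hPPP
  have hd1 : (1:ℝ) ≤ (d:ℝ) := by exact_mod_cast hd
  have hγd : (0:ℝ) < γ - d := by linarith
  have hγ0 : (0:ℝ) < γ := by linarith
  have l2 : (0:ℝ) < Real.log 2 := Real.log_pos one_lt_two
  set v : ℝ := (volume (Metric.ball (0 : EuclideanSpace ℝ (Fin d)) 1)).toReal with hv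
  have hv0 : 0 < v := ENNReal.toReal_pos (Metric.measure_ball_pos _ _ one_pos).ne'
    measure_ball_lt_top.ne
  set β : ℝ := (γ - d) / 2 with hβdef
  have hβ : 0 < β := by positivity
  set q : ℝ := (2:ℝ) ^ (-β) with hqdef
  have hq0 : 0 < q := Real.rpow_pos_of_pos two_pos _
  have hq1 : q < 1 := Real.rpow_lt_one_of_one_lt_of_neg one_lt_two (by linarith)
  set c : ℝ := 1 - q with hcdef
  have hc0 : 0 < c := by simp only [hcdef]; linarith
  set g : ℝ := (2:ℝ) ^ γ with hgdef
  have hg0 : 0 < g := Real.rpow_pos_of_pos two_pos _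
  set K : ℝ := c / (v * (2:ℝ) ^ (γ + (d:ℝ))) with hKdef
  have hK0 : 0 < K := by
    apply div_pos hc0; positivity
  set L : ℝ := 5 * g / c with hLdef
  have hL0 : 0 < L := by positivity
  set C : ℝ := max 1 (max ((Real.exp (1 + L) / K) ^ (1 / (γ - (d:ℝ))))
      ((g / (2 * c * β * Real.log 2)) ^ (1 / (γ - (d:ℝ))))) with hCdef
  have hC1 : (1:ℝ) ≤ C := le_max_left _ _
  refine ⟨C, lt_of_lt_of_le one_pos hC1, ?_⟩
  intro ε hε r hr R hRmax
  have hR2r : 2 * r < R := lt_of_le_of_lt (le_max_right _ _) hRmax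
  have hRC : C * ε ^ (-1 / (γ - (d:ℝ))) < R := lt_of_le_of_lt (le_max_left _ _) hRmax
  have hR2 : 2 < R := by linarith
  have hR0 : (0:ℝ) < R := by linarith
  have hR1 : (1:ℝ) ≤ R := by linarith
  have hrR : r < R / 2 := by linarith
  -- key power inequality
  have hkey : C ^ (γ - (d:ℝ)) ≤ ε * R ^ (γ - (d:ℝ)) := by
    have h0 : (0:ℝ) ≤ C * ε ^ (-1 / (γ - (d:ℝ))) := by positivity
    have h1 := Real.rpow_le_rpow h0 hRC.le hγd.le
    rw [Real.mul_rpow (by positivity) (Real.rpow_nonneg hε.le _),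
      ← Real.rpow_mul hε.le,
      show -1 / (γ - (d:ℝ)) * (γ - (d:ℝ)) = -1 by field_simp,
      Real.rpow_neg_one] at h1
    have h2 := mul_le_mul_of_nonneg_right h1 hε.le
    rw [mul_assoc, inv_mul_cancel₀ hε.ne', mul_one] at h2
    linarith [h2]
  have hCa : Real.exp (1 + L) / K ≤ C ^ (γ - (d:ℝ)) := by
    have hX : (Real.exp (1 + L) / K) ^ (1 / (γ - (d:ℝ))) ≤ C :=
      le_trans (le_max_left _ _) (le_max_right _ _)
    have h1 := Real.rpow_le_rpow (Real.rpow_nonneg (by positivity) _) hX hγd.le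
    rwa [← Real.rpow_mul (by positivity : (0:ℝ) ≤ Real.exp (1 + L) / K),
      show 1 / (γ - (d:ℝ)) * (γ - (d:ℝ)) = 1 by field_simp, Real.rpow_one] at h1
  have hCb : g / (2 * c * β * Real.log 2) ≤ C ^ (γ - (d:ℝ)) := by
    have hX : (g / (2 * c * β * Real.log 2)) ^ (1 / (γ - (d:ℝ))) ≤ C :=
      le_trans (le_max_right _ _) (le_max_right _ _)
    have h1 := Real.rpow_le_rpow (Real.rpow_nonneg (by positivity) _) hX hγd.le
    rwa [← Real.rpow_mul (by positivity : (0:ℝ) ≤ g / (2 * c * β * Real.log 2)),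
      show 1 / (γ - (d:ℝ)) * (γ - (d:ℝ)) = 1 by field_simp, Real.rpow_one] at h1
  have hCpow1 : (1:ℝ) ≤ C ^ (γ - (d:ℝ)) := by
    calc (1:ℝ) = 1 ^ (γ - (d:ℝ)) := (Real.one_rpow _).symm
    _ ≤ C ^ (γ - (d:ℝ)) := Real.rpow_le_rpow zero_le_one hC1 hγd.le
  have hεRγ : 2 * C ^ (γ - (d:ℝ)) ≤ ε * R ^ γ := by
    have hRd2 : (2:ℝ) ≤ R ^ (d:ℝ) := by
      calc (2:ℝ) ≤ R := hR2.le
      _ = R ^ (1:ℝ) := (Real.rpow_one R).symm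
      _ ≤ R ^ (d:ℝ) := Real.rpow_le_rpow_of_exponent_le hR1 hd1
    have hsplit : R ^ γ = R ^ (γ - (d:ℝ)) * R ^ (d:ℝ) := by
      rw [← Real.rpow_add hR0]; ring_nf
    have h2 : 2 * C ^ (γ - (d:ℝ)) ≤ R ^ (d:ℝ) * (ε * R ^ (γ - (d:ℝ))) :=
      mul_le_mul hRd2 hkey (by positivity) (by positivity)
    calc 2 * C ^ (γ - (d:ℝ)) ≤ R ^ (d:ℝ) * (ε * R ^ (γ - (d:ℝ))) := h2
    _ = ε * (R ^ (γ - (d:ℝ)) * R ^ (d:ℝ)) := by ring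
    _ = ε * R ^ γ := by rw [← hsplit]
  have hεR2 : 2 ≤ ε * R ^ γ := by nlinarith
  have hKε : Real.exp (1 + L) ≤ K * (ε * R ^ (γ - (d:ℝ))) := by
    have := mul_le_mul_of_nonneg_left hkey hK0.le
    calc Real.exp (1 + L) = (Real.exp (1 + L) / K) * K := by field_simp
    _ ≤ C ^ (γ - (d:ℝ)) * K := mul_le_mul_of_nonneg_right hCa hK0.le
    _ ≤ K * (ε * R ^ (γ - (d:ℝ))) := by rw [mul_comm]; exact this
  have hlin : 1 ≤ (c * g⁻¹ * (ε * R ^ γ)) * (β * Real.log 2) := by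
    have h1 : g ≤ C ^ (γ - (d:ℝ)) * (2 * c * β * Real.log 2) := by
      rw [div_le_iff₀ (by positivity)] at hCb; linarith
    have h2 : c * g⁻¹ * (2 * C ^ (γ - (d:ℝ))) * (β * Real.log 2)
        ≤ c * g⁻¹ * (ε * R ^ γ) * (β * Real.log 2) := by
      apply mul_le_mul_of_nonneg_right _ (by positivity)
      apply mul_le_mul_of_nonneg_left hεRγ (by positivity)
    refine le_trans ?_ h2
    have h3 : g⁻¹ * g ≤ g⁻¹ * (C ^ (γ - (d:ℝ)) * (2 * c * β * Real.log 2)) :=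
      mul_le_mul_of_nonneg_left h1 (inv_pos.2 hg0).le
    rw [inv_mul_cancel₀ hg0.ne'] at h3
    calc (1:ℝ) ≤ g⁻¹ * (C ^ (γ - (d:ℝ)) * (2 * c * β * Real.log 2)) := h3
    _ = c * g⁻¹ * (2 * C ^ (γ - (d:ℝ))) * (β * Real.log 2) := by ring
  have hL5 : c * g⁻¹ * L = 5 := by
    rw [hLdef]
    field_simp
  -- shells
  set A : ℕ → Set (EuclideanSpace ℝ (Fin d)) := fun k => {z : EuclideanSpace ℝ (Fin d) | 2 ^ k * R ≤ ‖z‖ ∧ ‖z‖ < 2 ^ (k + 1) * R} with hAdef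
  have hAmeas : ∀ k, MeasurableSet (A k) := by
    intro k
    have : A k = (fun z : EuclideanSpace ℝ (Fin d) => ‖z‖) ⁻¹' Set.Ico (2 ^ k * R) (2 ^ (k + 1) * R) := rfl
    rw [this]
    exact measurable_norm measurableSet_Ico
  set ρ : ℕ → ℝ := fun k => 2 ^ k * R / 2 with hρdef
  have hρ0 : ∀ k, 0 < ρ k := fun k => by positivity
  set m : ℕ → ℝ := fun k => c * ε * q ^ k * ρ k ^ γ with hmdef
  have hm0 : ∀ k, 0 < m k := fun k =>
    mul_pos (mul_pos (mul_pos hc0 hε) (pow_pos hq0 k)) (Real.rpow_pos_of_pos (hρ0 k) γ)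
  set Λ : ℕ → ℝ := fun k => v * ((2:ℝ) ^ (k + 1) * R) ^ (d:ℝ) with hΛdef
  have hΛ0 : ∀ k, 0 < Λ k := fun k => mul_pos hv0 (Real.rpow_pos_of_pos (by positivity) _)
  -- closed forms
  have hm_closed : ∀ k : ℕ, m k = c * ε * ((2:ℝ) ^ ((k:ℝ) * (γ - β) - γ) * R ^ γ) := by
    intro k
    have hq : q ^ k = (2:ℝ) ^ (-β * (k:ℝ)) := by
      rw [hqdef, ← Real.rpow_natCast ((2:ℝ) ^ (-β)) k,
        ← Real.rpow_mul (by norm_num : (0:ℝ) ≤ 2)]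
    have hρk : ρ k ^ γ = (2:ℝ) ^ (((k:ℝ) - 1) * γ) * R ^ γ := by
      have h1 : ρ k = (2:ℝ) ^ ((k:ℝ) - 1) * R := by
        show 2 ^ k * R / 2 = _
        rw [Real.rpow_sub two_pos, Real.rpow_one, Real.rpow_natCast]
        ring
      rw [h1, Real.mul_rpow (Real.rpow_nonneg (by norm_num) _) hR0.le,
        ← Real.rpow_mul (by norm_num : (0:ℝ) ≤ 2)]
    show c * ε * q ^ k * ρ k ^ γ = _
    rw [hq, hρk]
    rw [show c * ε * (2:ℝ) ^ (-β * (k:ℝ)) * ((2:ℝ) ^ (((k:ℝ) - 1) * γ) * R ^ γ)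
        = c * ε * (((2:ℝ) ^ (-β * (k:ℝ)) * (2:ℝ) ^ (((k:ℝ) - 1) * γ)) * R ^ γ) by ring,
      ← Real.rpow_add two_pos,
      show -β * (k:ℝ) + ((k:ℝ) - 1) * γ = (k:ℝ) * (γ - β) - γ by ring]
  have hΛ_closed : ∀ k : ℕ, Λ k = v * ((2:ℝ) ^ (((k:ℝ) + 1) * (d:ℝ)) * R ^ (d:ℝ)) := by
    intro k
    show v * ((2:ℝ) ^ (k + 1) * R) ^ (d:ℝ) = _
    have h2 : ((2:ℝ) ^ (k + 1) : ℝ) = (2:ℝ) ^ (((k:ℝ) + 1) : ℝ) := by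
      rw [← Real.rpow_natCast 2 (k + 1)]
      push_cast
      ring_nf
    rw [h2, Real.mul_rpow (Real.rpow_nonneg (by norm_num) _) hR0.le,
      ← Real.rpow_mul (by norm_num : (0:ℝ) ≤ 2)]
  have hratio : ∀ k : ℕ, m k / Λ k = K * (ε * R ^ (γ - (d:ℝ))) * (2:ℝ) ^ ((k:ℝ) * β) := by
    intro k
    rw [hm_closed k, hΛ_closed k, hKdef, div_mul_eq_mul_div, div_mul_eq_mul_div,
      div_eq_div_iff (by positivity) (by positivity)]
    calc c * ε * ((2:ℝ) ^ ((k:ℝ) * (γ - β) - γ) * R ^ γ) * (v * (2:ℝ) ^ (γ + (d:ℝ)))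
        = (c * ε * v) * ((2:ℝ) ^ ((k:ℝ) * (γ - β) - γ) * (2:ℝ) ^ (γ + (d:ℝ))) * R ^ γ := by
          ring
      _ = (c * ε * v) * (2:ℝ) ^ ((k:ℝ) * (γ - β) - γ + (γ + (d:ℝ))) * R ^ γ := by
          rw [← Real.rpow_add two_pos]
      _ = (c * ε * v) * (2:ℝ) ^ ((k:ℝ) * β + ((k:ℝ) + 1) * (d:ℝ))
            * (R ^ (γ - (d:ℝ)) * R ^ (d:ℝ)) := by
          rw [← Real.rpow_add hR0, show γ - (d:ℝ) + (d:ℝ) = γ by ring,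
            show (k:ℝ) * (γ - β) - γ + (γ + (d:ℝ)) = (k:ℝ) * β + ((k:ℝ) + 1) * (d:ℝ) by
              rw [hβdef]; ring]
      _ = c * (ε * R ^ (γ - (d:ℝ))) * (2:ℝ) ^ ((k:ℝ) * β)
            * (v * ((2:ℝ) ^ (((k:ℝ) + 1) * (d:ℝ)) * R ^ (d:ℝ))) := by
          rw [Real.rpow_add two_pos]; ring
  set t : ℕ → ℝ := fun k => Real.log (m k / Λ k) with htdef
  have hγβ : 0 < γ - β := by rw [hβdef]; linarith
  have hmain : ∀ k : ℕ, Real.exp (1 + L + (k:ℝ) * β * Real.log 2) ≤ m k / Λ k := by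
    intro k
    rw [hratio k]
    have h2kβ : (2:ℝ) ^ ((k:ℝ) * β) = Real.exp ((k:ℝ) * β * Real.log 2) := by
      rw [Real.rpow_def_of_pos two_pos, mul_comm (Real.log 2)]
    rw [Real.exp_add, h2kβ]
    exact mul_le_mul_of_nonneg_right hKε (Real.exp_nonneg _)
  have ht_low : ∀ k : ℕ, 1 + L + (k:ℝ) * β * Real.log 2 ≤ t k := by
    intro k
    show _ ≤ Real.log (m k / Λ k)
    exact (Real.le_log_iff_exp_le (div_pos (hm0 k) (hΛ0 k))).2 (hmain k)
  have ht0 : ∀ k, 0 ≤ t k := fun k => le_trans (by positivity) (ht_low k)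
  have hΛet : ∀ k, Λ k * Real.exp (t k) = m k := by
    intro k
    show Λ k * Real.exp (Real.log (m k / Λ k)) = m k
    rw [Real.exp_log (div_pos (hm0 k) (hΛ0 k))]
    field_simp
    exact mul_div_cancel_left₀ _ (hΛ0 k).ne'
  have hsubball : ∀ k, A k ⊆ Metric.ball (0 : EuclideanSpace ℝ (Fin d)) (2 ^ (k + 1) * R) := by
    intro k z hz
    exact mem_ball_zero_iff.mpr hz.2
  have hfr : Module.finrank ℝ (EuclideanSpace ℝ (Fin d)) = d := finrank_euclideanSpace_fin
  haveI hne : Nonempty (Fin d) := ⟨⟨0, hd⟩⟩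
  haveI : Nontrivial (EuclideanSpace ℝ (Fin d)) := by infer_instance
  have hvol_le : ∀ k, volume (A k)
      ≤ ENNReal.ofReal ((2 ^ (k + 1) * R) ^ (d:ℕ)) * volume (Metric.ball (0 : EuclideanSpace ℝ (Fin d)) 1) := by
    intro k
    refine le_trans (measure_mono (hsubball k)) ?_
    have hball := Measure.addHaar_ball (volume : Measure (EuclideanSpace ℝ (Fin d))) (0 : EuclideanSpace ℝ (Fin d))
      (by positivity : (0:ℝ) ≤ 2 ^ (k + 1) * R)
    rw [hfr] at hball
    rw [hball]
  have hvol_fin : ∀ k, volume (A k) < ⊤ := fun k =>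
    lt_of_le_of_lt (hvol_le k) (ENNReal.mul_lt_top ENNReal.ofReal_lt_top measure_ball_lt_top)
  set lam : ℕ → ℝ := fun k => (volume (A k)).toReal with hlamdef
  have hlam_le : ∀ k, lam k ≤ Λ k := by
    intro k
    have h1 := ENNReal.toReal_mono
      (ENNReal.mul_ne_top ENNReal.ofReal_ne_top measure_ball_lt_top.ne) (hvol_le k)
    rw [ENNReal.toReal_mul, ENNReal.toReal_ofReal (by positivity)] at h1
    refine le_trans h1 ?_
    show _ ≤ v * ((2:ℝ) ^ (k + 1) * R) ^ (d:ℝ)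
    rw [← Real.rpow_natCast ((2:ℝ) ^ (k + 1) * R) d]
    exact le_of_eq (mul_comm _ _)
  have hmM : ∀ k, c * g⁻¹ * (ε * R ^ γ) ≤ m k := by
    intro k
    rw [hm_closed k]
    have he : c * g⁻¹ * (ε * R ^ γ) = c * ε * ((2:ℝ) ^ (-γ) * R ^ γ) := by
      rw [hgdef, ← Real.rpow_neg (by norm_num : (0:ℝ) ≤ 2)]
      ring
    rw [he]
    apply mul_le_mul_of_nonneg_left _ (by positivity : (0:ℝ) ≤ c * ε)
    apply mul_le_mul_of_nonneg_right _ (Real.rpow_nonneg hR0.le γ)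
    exact Real.rpow_le_rpow_of_exponent_le one_le_two
      (by nlinarith [mul_nonneg (Nat.cast_nonneg (α := ℝ) k) hγβ.le])
  have hcher : ∀ k : ℕ, P {ω | N ω (A k) > ENNReal.ofReal (m k)}
      ≤ ENNReal.ofReal (Real.exp (-(5 * (ε * R ^ γ) + (k:ℝ)))) := by
    intro k
    have hp := poisson_tail P (fun ω => N ω (A k)) (hNmeas _ (hAmeas k)) (lam k)
      ENNReal.toReal_nonneg
      (fun n => hpmf (A k) (hAmeas k) (hvol_fin k) n) (m k) (t k) (hm0 k).le (ht0 k)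
    refine le_trans hp (ENNReal.ofReal_le_ofReal (Real.exp_le_exp.2 ?_))
    have h1 : lam k * Real.exp (t k) ≤ m k := by
      calc lam k * Real.exp (t k) ≤ Λ k * Real.exp (t k) :=
            mul_le_mul_of_nonneg_right (hlam_le k) (Real.exp_nonneg _)
      _ = m k := hΛet k
    have h2 : (1 + L + (k:ℝ) * β * Real.log 2) * m k ≤ t k * m k :=
      mul_le_mul_of_nonneg_right (ht_low k) (hm0 k).le
    have h3 : 5 * (ε * R ^ γ) ≤ L * m k := by
      calc 5 * (ε * R ^ γ) = (c * g⁻¹ * L) * (ε * R ^ γ) := by rw [hL5]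
      _ = L * (c * g⁻¹ * (ε * R ^ γ)) := by ring
      _ ≤ L * m k := mul_le_mul_of_nonneg_left (hmM k) hL0.le
    have h4 : (k:ℝ) ≤ ((k:ℝ) * β * Real.log 2) * m k := by
      calc (k:ℝ) = (k:ℝ) * 1 := (mul_one _).symm
      _ ≤ (k:ℝ) * ((c * g⁻¹ * (ε * R ^ γ)) * (β * Real.log 2)) :=
            mul_le_mul_of_nonneg_left hlin (Nat.cast_nonneg k)
      _ = ((k:ℝ) * β * Real.log 2) * (c * g⁻¹ * (ε * R ^ γ)) := by ring
      _ ≤ ((k:ℝ) * β * Real.log 2) * m k :=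
            mul_le_mul_of_nonneg_left (hmM k) (by positivity)
    nlinarith [hm0 k]
  -- covering the event by shell events
  have hcover : {ω | ∃ y : EuclideanSpace ℝ (Fin d), ‖y‖ < r ∧ T R y ω > ENNReal.ofReal ε}
      ⊆ ⋃ k : ℕ, {ω | N ω (A k) > ENNReal.ofReal (m k)} := by
    intro ω hω
    obtain ⟨y, hy, hTy⟩ := hω
    by_contra hn
    have hNle : ∀ k, N ω (A k) ≤ ENNReal.ofReal (m k) := by
      intro k
      by_contra hlt
      exact hn (Set.mem_iUnion.2 ⟨k, not_le.1 hlt⟩)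
    apply absurd hTy
    rw [gt_iff_lt, not_lt, hT R y ω]
    have hc1q : (1:ℝ) - q ≠ 0 := by
      have : q < 1 := hq1
      intro h
      rw [sub_eq_zero] at h
      exact absurd h.symm (ne_of_lt this)
    calc (∫⁻ z, (if ‖z‖ ≥ R then ENNReal.ofReal (‖y - z‖ ^ (-γ)) else 0) ∂(N ω))
        ≤ ∫⁻ z, ∑' k : ℕ, (A k).indicator (fun _ => ENNReal.ofReal (ρ k ^ (-γ))) z ∂(N ω) := by
          refine lintegral_mono fun z => ?_
          by_cases hz : ‖z‖ ≥ R
          · rw [if_pos hz]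
            have hx1 : (1:ℝ) ≤ ‖z‖ / R := (one_le_div hR0).2 hz
            have hlog0 : 0 ≤ Int.log 2 (‖z‖ / R) := by
              have := Int.log_mono_right (b := 2) one_pos hx1
              rwa [Int.log_one_right] at this
            set k := (Int.log 2 (‖z‖ / R)).toNat with hkdef
            have hcast : ((k : ℤ)) = Int.log 2 (‖z‖ / R) := Int.toNat_of_nonneg hlog0
            have hlow : (2:ℝ) ^ k ≤ ‖z‖ / R := by
              have h1 := Int.zpow_log_le_self (b := 2) (R := ℝ) (by norm_num)
                (lt_of_lt_of_le one_pos hx1)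
              rwa [← hcast, zpow_natCast] at h1
            have hhigh : ‖z‖ / R < (2:ℝ) ^ (k + 1) := by
              have h1 := Int.lt_zpow_succ_log_self (b := 2) (R := ℝ) (by norm_num) (‖z‖ / R)
              rwa [← hcast, show ((k:ℤ) + 1) = ((k + 1 : ℕ) : ℤ) by push_cast; ring,
                zpow_natCast] at h1
            have hzA : 2 ^ k * R ≤ ‖z‖ ∧ ‖z‖ < 2 ^ (k + 1) * R := by
              constructor
              · calc (2:ℝ) ^ k * R ≤ ‖z‖ / R * R :=
                      mul_le_mul_of_nonneg_right hlow hR0.le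
                  _ = ‖z‖ := by field_simp
              · calc ‖z‖ = ‖z‖ / R * R := by field_simp
                  _ < (2:ℝ) ^ (k + 1) * R := mul_lt_mul_of_pos_right hhigh hR0
            have hdist : ρ k ≤ ‖y - z‖ := by
              have hzy : ‖z‖ - ‖y‖ ≤ ‖y - z‖ := by
                rw [norm_sub_rev]
                exact norm_sub_norm_le z y
              have h2k1 : (1:ℝ) ≤ 2 ^ k := one_le_pow₀ one_le_two
              have hzk := hzA.1
              show 2 ^ k * R / 2 ≤ ‖y - z‖
              nlinarith [hy, hrR]
            calc ENNReal.ofReal (‖y - z‖ ^ (-γ))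
                ≤ ENNReal.ofReal (ρ k ^ (-γ)) :=
                  ENNReal.ofReal_le_ofReal
                    (Real.rpow_le_rpow_of_nonpos (hρ0 k) hdist (by linarith))
              _ = (A k).indicator (fun _ => ENNReal.ofReal (ρ k ^ (-γ))) z := by
                  have hzA' : z ∈ A k := hzA
                  exact (Set.indicator_of_mem hzA'
                    (fun _ => ENNReal.ofReal (ρ k ^ (-γ)))).symm
              _ ≤ ∑' j : ℕ, (A j).indicator (fun _ => ENNReal.ofReal (ρ j ^ (-γ))) z :=
                  ENNReal.le_tsum k
          · rw [if_neg hz]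
            exact zero_le
      _ = ∑' k : ℕ, ∫⁻ z, (A k).indicator (fun _ => ENNReal.ofReal (ρ k ^ (-γ))) z ∂(N ω) :=
          lintegral_tsum fun k => (measurable_const.indicator (hAmeas k)).aemeasurable
      _ = ∑' k : ℕ, ENNReal.ofReal (ρ k ^ (-γ)) * N ω (A k) :=
          tsum_congr fun k => lintegral_indicator_const (hAmeas k) _
      _ ≤ ∑' k : ℕ, ENNReal.ofReal (ρ k ^ (-γ)) * ENNReal.ofReal (m k) :=
          ENNReal.tsum_le_tsum fun k => mul_le_mul_right (hNle k) _
      _ = ∑' k : ℕ, ENNReal.ofReal (c * ε * q ^ k) := by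
          refine tsum_congr fun k => ?_
          rw [← ENNReal.ofReal_mul (Real.rpow_nonneg (hρ0 k).le _)]
          congr 1
          show ρ k ^ (-γ) * (c * ε * q ^ k * ρ k ^ γ) = c * ε * q ^ k
          rw [Real.rpow_neg (hρ0 k).le]
          field_simp
          exact div_self (Real.rpow_pos_of_pos (hρ0 k) γ).ne'
      _ = ENNReal.ofReal (∑' k : ℕ, c * ε * q ^ k) :=
          (ENNReal.ofReal_tsum_of_nonneg (fun k => by positivity)
            ((summable_geometric_of_lt_one hq0.le hq1).mul_left (c * ε))).symm
      _ = ENNReal.ofReal ε := by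
          rw [tsum_mul_left, tsum_geometric_of_lt_one hq0.le hq1]
          congr 1
          rw [hcdef]
          field_simp
  -- final union bound and summation
  have hexp1 : Real.exp (-1) < 1 := Real.exp_lt_one_iff.2 (by norm_num)
  have he2 : (2:ℝ) ≤ Real.exp 1 := by
    have := Real.add_one_le_exp 1
    linarith
  calc P {ω | ∃ y : EuclideanSpace ℝ (Fin d), ‖y‖ < r ∧ T R y ω > ENNReal.ofReal ε}
      ≤ P (⋃ k : ℕ, {ω | N ω (A k) > ENNReal.ofReal (m k)}) := measure_mono hcover
    _ ≤ ∑' k : ℕ, P {ω | N ω (A k) > ENNReal.ofReal (m k)} := measure_iUnion_le _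
    _ ≤ ∑' k : ℕ, ENNReal.ofReal (Real.exp (-(5 * (ε * R ^ γ) + (k:ℝ)))) :=
        ENNReal.tsum_le_tsum hcher
    _ = ∑' k : ℕ, ENNReal.ofReal (Real.exp (-(5 * (ε * R ^ γ))) * Real.exp (-1) ^ k) := by
        refine tsum_congr fun k => ?_
        congr 1
        rw [← Real.exp_nat_mul, ← Real.exp_add]
        congr 1
        push_cast
        ring
    _ = ENNReal.ofReal (∑' k : ℕ, Real.exp (-(5 * (ε * R ^ γ))) * Real.exp (-1) ^ k) :=
        (ENNReal.ofReal_tsum_of_nonneg (fun k => by positivity)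
          ((summable_geometric_of_lt_one (Real.exp_nonneg _) hexp1).mul_left _)).symm
    _ ≤ ENNReal.ofReal (Real.exp (-4 * ε * R ^ γ)) := by
        apply ENNReal.ofReal_le_ofReal
        rw [tsum_mul_left, tsum_geometric_of_lt_one (Real.exp_nonneg _) hexp1]
        have hhalf : (1:ℝ) / 2 ≤ 1 - Real.exp (-1) := by
          rw [Real.exp_neg]
          have h1 : (Real.exp 1)⁻¹ ≤ 2⁻¹ := by
            apply inv_anti₀ two_pos he2
          norm_num at h1 ⊢
          linarith
        have hinv : (1 - Real.exp (-1))⁻¹ ≤ 2 := by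
          have h2 := inv_anti₀ (by norm_num : (0:ℝ) < 1/2) hhalf
          norm_num at h2
          linarith
        have hea : (2:ℝ) ≤ Real.exp (ε * R ^ γ) := by
          have h3 := Real.add_one_le_exp (ε * R ^ γ)
          linarith
        have hsplit : Real.exp (-4 * ε * R ^ γ)
            = Real.exp (-(5 * (ε * R ^ γ))) * Real.exp (ε * R ^ γ) := by
          rw [← Real.exp_add]
          congr 1
          ring
        rw [hsplit]
        apply mul_le_mul_of_nonneg_left _ (Real.exp_nonneg _)
        linarith
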